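/- arXiv:1212.5088 — 3 statements merged into one kernel-verified Lean document; each statement's English description precedes it below -/
import Mathlib

section
/- If f : ℝ^d → ℝ^d is C² with bounded first and second derivatives, then the composition map q ↦ f∘q from H¹(S¹, ℝ^d) to itself is Lipschitz on bounded sets: ‖f∘q₁ − f∘q₂‖_{H¹} ≤ C ‖f‖_{2,∞} ‖q₁ − q₂‖_{H¹}, where C depends only on bounds for ‖q₁‖_{H¹}, ‖q₂‖_{H¹}. -/
open MeasureTheory intervalIntegral

/-- The `H¹` norm of a periodic vector-valued function `q` with derivative `q'`
on the circle (modelled as `[0,1]` with periodic identification). -/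
noncomputable def H1NormV {d : ℕ} (q q' : ℝ → EuclideanSpace ℝ (Fin d)) : ℝ :=
  Real.sqrt ((∫ s in (0:ℝ)..1, ‖q s‖ ^ 2) + ∫ s in (0:ℝ)..1, ‖q' s‖ ^ 2)

/-- Sobolev-type sup bound on `[0,1]`: `‖g s‖² ≤ 2∫‖g‖² + ∫‖g'‖²`. -/
lemma sup_bound_aux {d : ℕ} (g g' : ℝ → EuclideanSpace ℝ (Fin d))
    (hg : ∀ s, HasDerivAt g (g' s) s) (hg' : Continuous g')
    {s : ℝ} (hs : s ∈ Set.Icc (0:ℝ) 1) :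
    ‖g s‖ ^ 2 ≤ 2 * (∫ u in (0:ℝ)..1, ‖g u‖ ^ 2) + ∫ u in (0:ℝ)..1, ‖g' u‖ ^ 2 := by
  have hgc : Continuous g := continuous_iff_continuousAt.2 fun x => (hg x).continuousAt
  set D : ℝ → ℝ := fun t => 2 * (inner ℝ (g t) (g' t) : ℝ) with hDdef
  have hD : ∀ t, HasDerivAt (fun t => ‖g t‖ ^ 2) (D t) t := by
    intro t
    have h := (hg t).inner ℝ (hg t)
    simp_rw [real_inner_self_eq_norm_sq] at h
    refine h.congr_deriv ?_
    rw [hDdef]; dsimp only; rw [real_inner_comm]; ring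
  have hDc : Continuous D := continuous_const.mul (hgc.inner hg')
  have habs : ∀ t, |D t| ≤ 2 * ‖g t‖ * ‖g' t‖ := by
    intro t
    rw [hDdef]; dsimp only
    rw [abs_mul, abs_two, mul_assoc]
    exact mul_le_mul_of_nonneg_left (abs_real_inner_le_norm _ _) (by norm_num)
  have hcont2 : Continuous fun t => 2 * ‖g t‖ * ‖g' t‖ :=
    (continuous_const.mul hgc.norm).mul hg'.norm
  have hJint : ∀ a b : ℝ, IntervalIntegrable (fun t => 2 * ‖g t‖ * ‖g' t‖) volume a b :=
    hcont2.intervalIntegrable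
  set J : ℝ := ∫ u in (0:ℝ)..1, 2 * ‖g u‖ * ‖g' u‖ with hJdef
  have key : ∀ u ∈ Set.Icc (0:ℝ) 1, ‖g s‖ ^ 2 ≤ ‖g u‖ ^ 2 + J := by
    intro u hu
    have hftc : ∫ t in u..s, D t = ‖g s‖ ^ 2 - ‖g u‖ ^ 2 :=
      integral_eq_sub_of_hasDerivAt (fun x _ => hD x) (hDc.intervalIntegrable u s)
    have h1 : ∫ t in u..s, D t ≤ J := by
      rcases le_total u s with h | h
      · calc ∫ t in u..s, D t ≤ ∫ t in u..s, 2 * ‖g t‖ * ‖g' t‖ :=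
              integral_mono_on h (hDc.intervalIntegrable u s) (hJint u s)
                (fun t _ => le_of_abs_le (habs t))
          _ ≤ J := integral_mono_interval hu.1 h hs.2
              (Filter.Eventually.of_forall fun t => by positivity) (hJint 0 1)
      · have : ∫ t in u..s, D t = ∫ t in s..u, -D t := by
          rw [intervalIntegral.integral_neg, ← integral_symm]
        rw [this]
        calc ∫ t in s..u, -D t ≤ ∫ t in s..u, 2 * ‖g t‖ * ‖g' t‖ :=
              integral_mono_on h ((hDc.neg).intervalIntegrable s u) (hJint s u)
                (fun t _ => (neg_le_abs _).trans (habs t))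
          _ ≤ J := integral_mono_interval hs.1 h hu.2
              (Filter.Eventually.of_forall fun t => by positivity) (hJint 0 1)
    linarith [hftc ▸ h1]
  have hint1 : IntervalIntegrable (fun _ : ℝ => ‖g s‖ ^ 2) volume 0 1 :=
    intervalIntegrable_const
  have hint2 : IntervalIntegrable (fun u => ‖g u‖ ^ 2 + J) volume 0 1 :=
    ((hgc.norm.pow 2).add continuous_const).intervalIntegrable 0 1
  have havg := integral_mono_on (by norm_num : (0:ℝ) ≤ 1) hint1 hint2 key
  rw [intervalIntegral.integral_const] at havg
  simp only [sub_zero, one_smul] at havg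
  have hsplit : (∫ u in (0:ℝ)..1, (‖g u‖ ^ 2 + J)) =
      (∫ u in (0:ℝ)..1, ‖g u‖ ^ 2) + J := by
    rw [intervalIntegral.integral_add (f := fun u => ‖g u‖ ^ 2) (g := fun _ => J) ((hgc.norm.pow 2).intervalIntegrable 0 1)
      intervalIntegrable_const, intervalIntegral.integral_const]
    simp
  have hJle : J ≤ (∫ u in (0:ℝ)..1, ‖g u‖ ^ 2) + ∫ u in (0:ℝ)..1, ‖g' u‖ ^ 2 := by
    rw [hJdef, ← intervalIntegral.integral_add (f := fun u => ‖g u‖ ^ 2) (g := fun u => ‖g' u‖ ^ 2) ((hgc.norm.pow 2).intervalIntegrable 0 1)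
      ((hg'.norm.pow 2).intervalIntegrable 0 1)]
    exact integral_mono_on (by norm_num) (hJint 0 1)
      (((hgc.norm.pow 2).add (hg'.norm.pow 2)).intervalIntegrable 0 1)
      (fun t _ => two_mul_le_add_sq _ _)
  rw [hsplit] at havg
  linarith

/-- If `f : ℝ^d → ℝ^d` is `C²` with `f`, `Df`, `D²f` all bounded by
`M` (i.e. `‖f‖_{2,∞} ≤ M`), then `q ↦ f∘q` is Lipschitz on bounded sets of
`H¹(S¹, ℝ^d)`: for every `r` there is `C` (depending only on `r`) such that for
all `q₁, q₂` with `H¹` norms `≤ r`,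
`‖f∘q₁ − f∘q₂‖_{H¹} ≤ C ‖f‖_{2,∞} ‖q₁ − q₂‖_{H¹}`. -/
theorem stmt_3 (d : ℕ) (f : EuclideanSpace ℝ (Fin d) → EuclideanSpace ℝ (Fin d))
    (hf : ContDiff ℝ 2 f) (M : ℝ)
    (hM : ∀ x, ‖f x‖ ≤ M ∧ ‖fderiv ℝ f x‖ ≤ M ∧ ‖fderiv ℝ (fderiv ℝ f) x‖ ≤ M)
    (r : ℝ) (hr : 0 < r) :
    ∃ C : ℝ, 0 < C ∧
      ∀ (q₁ q₂ q₁' q₂' : ℝ → EuclideanSpace ℝ (Fin d)),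
        Function.Periodic q₁ 1 → Function.Periodic q₂ 1 →
        (∀ s, HasDerivAt q₁ (q₁' s) s) → (∀ s, HasDerivAt q₂ (q₂' s) s) →
        Continuous q₁' → Continuous q₂' →
        H1NormV q₁ q₁' ≤ r → H1NormV q₂ q₂' ≤ r →
        H1NormV (fun s => f (q₁ s) - f (q₂ s))
            (fun s => fderiv ℝ f (q₁ s) (q₁' s) - fderiv ℝ f (q₂ s) (q₂' s)) ≤
          C * M * H1NormV (fun s => q₁ s - q₂ s) (fun s => q₁' s - q₂' s) := by
  have hM0 : 0 ≤ M := (norm_nonneg _).trans (hM 0).1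
  refine ⟨Real.sqrt (2 + 4 * r ^ 2), Real.sqrt_pos.2 (by positivity), ?_⟩
  intro q₁ q₂ q₁' q₂' _ _ hq₁ hq₂ hq₁' hq₂' hn₁ hn₂
  have hc1 : Continuous q₁ := continuous_iff_continuousAt.2 fun x => (hq₁ x).continuousAt
  have hc2 : Continuous q₂ := continuous_iff_continuousAt.2 fun x => (hq₂ x).continuousAt
  have hfc : Continuous f := hf.continuous
  have hdf : Continuous (fderiv ℝ f) := hf.continuous_fderiv (by norm_num)
  have hfd : Differentiable ℝ f := hf.differentiable (by norm_num)
  have hf1 : ContDiff ℝ 1 (fderiv ℝ f) := hf.fderiv_right (by norm_num)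
  have hfdd : Differentiable ℝ (fderiv ℝ f) := hf1.differentiable (by norm_num)
  -- Lipschitz bounds
  have hLip : ∀ x y, ‖f x - f y‖ ≤ M * ‖x - y‖ := fun x y =>
    Convex.norm_image_sub_le_of_norm_fderiv_le (fun z _ => hfd z)
      (fun z _ => (hM z).2.1) convex_univ (Set.mem_univ y) (Set.mem_univ x)
  have hLipD : ∀ x y, ‖fderiv ℝ f x - fderiv ℝ f y‖ ≤ M * ‖x - y‖ := fun x y =>
    Convex.norm_image_sub_le_of_norm_fderiv_le (fun z _ => hfdd z)
      (fun z _ => (hM z).2.2) convex_univ (Set.mem_univ y) (Set.mem_univ x)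
  -- abbreviations
  set A0 : ℝ := ∫ u in (0:ℝ)..1, ‖q₁ u - q₂ u‖ ^ 2 with hA0
  set B0 : ℝ := ∫ u in (0:ℝ)..1, ‖q₁' u - q₂' u‖ ^ 2 with hB0
  have hΔ : ∀ u, HasDerivAt (fun s => q₁ s - q₂ s) (q₁' u - q₂' u) u :=
    fun u => (hq₁ u).sub (hq₂ u)
  have hΔ'c : Continuous fun u => q₁' u - q₂' u := hq₁'.sub hq₂'
  have hΔc : Continuous fun u => q₁ u - q₂ u := hc1.sub hc2
  have hsup : ∀ u ∈ Set.Icc (0:ℝ) 1, ‖q₁ u - q₂ u‖ ^ 2 ≤ 2 * A0 + B0 :=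
    fun u hu => sup_bound_aux _ _ hΔ hΔ'c hu
  have hA0nn : 0 ≤ A0 :=
    intervalIntegral.integral_nonneg (by norm_num) (fun u _ => by positivity)
  have hB0nn : 0 ≤ B0 :=
    intervalIntegral.integral_nonneg (by norm_num) (fun u _ => by positivity)
  -- bound ∫ ‖q₂'‖² ≤ r²
  have hRle : (∫ u in (0:ℝ)..1, ‖q₂' u‖ ^ 2) ≤ r ^ 2 := by
    have h1 : 0 ≤ ∫ u in (0:ℝ)..1, ‖q₂ u‖ ^ 2 :=
      intervalIntegral.integral_nonneg (by norm_num) (fun u _ => by positivity)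
    have h2 : 0 ≤ ∫ u in (0:ℝ)..1, ‖q₂' u‖ ^ 2 :=
      intervalIntegral.integral_nonneg (by norm_num) (fun u _ => by positivity)
    have hsq : (∫ u in (0:ℝ)..1, ‖q₂ u‖ ^ 2) + (∫ u in (0:ℝ)..1, ‖q₂' u‖ ^ 2) ≤ r ^ 2 := by
      have := Real.sq_sqrt (by linarith : (0:ℝ) ≤
        (∫ u in (0:ℝ)..1, ‖q₂ u‖ ^ 2) + ∫ u in (0:ℝ)..1, ‖q₂' u‖ ^ 2)
      rw [← this]
      exact pow_le_pow_left₀ (Real.sqrt_nonneg _) hn₂ 2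
    linarith
  -- pointwise bound on the function part
  have hptA : ∀ u ∈ Set.Icc (0:ℝ) 1,
      ‖f (q₁ u) - f (q₂ u)‖ ^ 2 ≤ M ^ 2 * ‖q₁ u - q₂ u‖ ^ 2 := by
    intro u _
    have h := hLip (q₁ u) (q₂ u)
    nlinarith [norm_nonneg (f (q₁ u) - f (q₂ u)), norm_nonneg (q₁ u - q₂ u)]
  -- pointwise bound on the derivative part
  have hptB : ∀ u ∈ Set.Icc (0:ℝ) 1,
      ‖fderiv ℝ f (q₁ u) (q₁' u) - fderiv ℝ f (q₂ u) (q₂' u)‖ ^ 2 ≤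
        2 * M ^ 2 * ‖q₁' u - q₂' u‖ ^ 2 +
        2 * M ^ 2 * (2 * A0 + B0) * ‖q₂' u‖ ^ 2 := by
    intro u hu
    have hsplit : fderiv ℝ f (q₁ u) (q₁' u) - fderiv ℝ f (q₂ u) (q₂' u) =
        fderiv ℝ f (q₁ u) (q₁' u - q₂' u) +
          (fderiv ℝ f (q₁ u) - fderiv ℝ f (q₂ u)) (q₂' u) := by
      simp [map_sub, ContinuousLinearMap.sub_apply]
    have h1 : ‖fderiv ℝ f (q₁ u) (q₁' u - q₂' u)‖ ≤ M * ‖q₁' u - q₂' u‖ :=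
      ((fderiv ℝ f (q₁ u)).le_opNorm _).trans
        (mul_le_mul_of_nonneg_right (hM (q₁ u)).2.1 (norm_nonneg _))
    have h2 : ‖(fderiv ℝ f (q₁ u) - fderiv ℝ f (q₂ u)) (q₂' u)‖ ≤
        M * ‖q₁ u - q₂ u‖ * ‖q₂' u‖ :=
      ((fderiv ℝ f (q₁ u) - fderiv ℝ f (q₂ u)).le_opNorm _).trans
        (mul_le_mul_of_nonneg_right (hLipD (q₁ u) (q₂ u)) (norm_nonneg _))
    have h3 : ‖fderiv ℝ f (q₁ u) (q₁' u) - fderiv ℝ f (q₂ u) (q₂' u)‖ ≤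
        M * ‖q₁' u - q₂' u‖ + M * ‖q₁ u - q₂ u‖ * ‖q₂' u‖ := by
      rw [hsplit]
      exact (norm_add_le _ _).trans (add_le_add h1 h2)
    have h4 := hsup u hu
    nlinarith [norm_nonneg (fderiv ℝ f (q₁ u) (q₁' u) - fderiv ℝ f (q₂ u) (q₂' u)),
      norm_nonneg (q₁' u - q₂' u), norm_nonneg (q₁ u - q₂ u), norm_nonneg (q₂' u),
      sq_nonneg (M * ‖q₁' u - q₂' u‖ - M * ‖q₁ u - q₂ u‖ * ‖q₂' u‖),
      mul_le_mul_of_nonneg_right h4 (sq_nonneg ‖q₂' u‖),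
      sq_nonneg M, sq_nonneg (‖q₂' u‖), mul_nonneg hM0 (norm_nonneg (q₁' u - q₂' u))]
  -- continuity of integrands
  have hcF : Continuous fun u => ‖f (q₁ u) - f (q₂ u)‖ ^ 2 :=
    (((hfc.comp hc1).sub (hfc.comp hc2)).norm.pow 2)
  have hcF' : Continuous fun u =>
      ‖fderiv ℝ f (q₁ u) (q₁' u) - fderiv ℝ f (q₂ u) (q₂' u)‖ ^ 2 := by
    apply Continuous.pow
    apply Continuous.norm
    exact (((hdf.comp hc1).clm_apply hq₁').sub ((hdf.comp hc2).clm_apply hq₂'))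
  -- integral bounds
  have hA : (∫ u in (0:ℝ)..1, ‖f (q₁ u) - f (q₂ u)‖ ^ 2) ≤ M ^ 2 * A0 := by
    rw [hA0, ← intervalIntegral.integral_const_mul]
    exact integral_mono_on (by norm_num) (hcF.intervalIntegrable 0 1)
      ((continuous_const.mul (hΔc.norm.pow 2)).intervalIntegrable 0 1) hptA
  have hB : (∫ u in (0:ℝ)..1,
      ‖fderiv ℝ f (q₁ u) (q₁' u) - fderiv ℝ f (q₂ u) (q₂' u)‖ ^ 2) ≤
      2 * M ^ 2 * B0 + 2 * M ^ 2 * (2 * A0 + B0) * r ^ 2 := by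
    have hstep : (∫ u in (0:ℝ)..1,
        ‖fderiv ℝ f (q₁ u) (q₁' u) - fderiv ℝ f (q₂ u) (q₂' u)‖ ^ 2) ≤
        ∫ u in (0:ℝ)..1, (2 * M ^ 2 * ‖q₁' u - q₂' u‖ ^ 2 +
          2 * M ^ 2 * (2 * A0 + B0) * ‖q₂' u‖ ^ 2) :=
      integral_mono_on (by norm_num) (hcF'.intervalIntegrable 0 1)
        (((continuous_const.mul (hΔ'c.norm.pow 2)).add
          (continuous_const.mul (hq₂'.norm.pow 2))).intervalIntegrable 0 1) hptB
    rw [intervalIntegral.integral_add (f := fun u => 2 * M ^ 2 * ‖q₁' u - q₂' u‖ ^ 2)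
        (g := fun u => 2 * M ^ 2 * (2 * A0 + B0) * ‖q₂' u‖ ^ 2)
        ((continuous_const.mul (hΔ'c.norm.pow 2)).intervalIntegrable 0 1)
        ((continuous_const.mul (hq₂'.norm.pow 2)).intervalIntegrable 0 1),
      intervalIntegral.integral_const_mul, intervalIntegral.integral_const_mul] at hstep
    have hlast : 2 * M ^ 2 * (2 * A0 + B0) * (∫ u in (0:ℝ)..1, ‖q₂' u‖ ^ 2) ≤
        2 * M ^ 2 * (2 * A0 + B0) * r ^ 2 :=
      mul_le_mul_of_nonneg_left hRle (by positivity)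
    rw [← hB0]  at hstep
    linarith
  -- conclude
  unfold H1NormV
  rw [← hA0, ← hB0]
  have hrhs : Real.sqrt (2 + 4 * r ^ 2) * M * Real.sqrt (A0 + B0) =
      Real.sqrt ((2 + 4 * r ^ 2) * (M ^ 2 * (A0 + B0))) := by
    rw [Real.sqrt_mul (by positivity), Real.sqrt_mul (by positivity),
      Real.sqrt_sq hM0, mul_assoc]
  rw [hrhs]
  apply Real.sqrt_le_sqrt
  nlinarith [mul_nonneg (mul_nonneg (sq_nonneg M) hA0nn) (sq_nonneg r),
    mul_nonneg (mul_nonneg (sq_nonneg M) hB0nn) (sq_nonneg r)]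
end

section
/- Let B be a Hilbert space of vector fields on ℝ² continuously embedded in C¹ (i.e., there is C_e with ‖v‖_{1,∞} ≤ C_e ‖v‖_B for all v ∈ B). Then the momentum map J : L²(S¹,ℝ²) × L²(S¹,ℝ²) → B*, defined by J(p,q)(v) = ⟨p, v∘q⟩_{L²}, is well-defined and Lipschitz continuous on bounded sets of L² × L² with respect to the dual norm on B*. -/
open MeasureTheory
open scoped RealInnerProductSpace

section Aux

variable {α : Type*} [MeasurableSpace α] {μ : Measure α}

theorem stmt5_aux_mul {E F : Type*} [NormedAddCommGroup E] [NormedAddCommGroup F]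
    {f : α → E} {g : α → F} (hf : MemLp f 2 μ) (hg : MemLp g 2 μ) :
    Integrable (fun a => ‖f a‖ * ‖g a‖) μ := by
  refine Integrable.mono' (((hf.norm.integrable_sq).add (hg.norm.integrable_sq)).div_const 2)
    (hf.1.norm.mul hg.1.norm) ?_
  filter_upwards with a
  have h := two_mul_le_add_sq ‖f a‖ ‖g a‖
  have h1 : (0:ℝ) ≤ ‖f a‖ * ‖g a‖ := mul_nonneg (norm_nonneg _) (norm_nonneg _)
  rw [Real.norm_of_nonneg h1]
  simp only [Pi.add_apply]
  nlinarith

theorem stmt5_aux_CS {E F : Type*} [NormedAddCommGroup E] [NormedAddCommGroup F]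
    {f : α → E} {g : α → F} (hf : MemLp f 2 μ) (hg : MemLp g 2 μ) :
    ∫ a, ‖f a‖ * ‖g a‖ ∂μ ≤ (eLpNorm f 2 μ).toReal * (eLpNorm g 2 μ).toReal := by
  have h22 : (2:ℝ).HolderConjugate 2 := Real.HolderConjugate.two_two
  have h2 : ENNReal.ofReal (2:ℝ) = 2 := by norm_num
  have hf' : MemLp (fun a => ‖f a‖) (ENNReal.ofReal 2) μ := h2 ▸ hf.norm
  have hg' : MemLp (fun a => ‖g a‖) (ENNReal.ofReal 2) μ := h2 ▸ hg.norm
  have H := integral_mul_norm_le_Lp_mul_Lq h22 hf' hg'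
  simp only [norm_norm] at H
  refine H.trans (le_of_eq ?_)
  rw [hf.eLpNorm_eq_integral_rpow_norm two_ne_zero ENNReal.ofNat_ne_top,
    hg.eLpNorm_eq_integral_rpow_norm two_ne_zero ENNReal.ofNat_ne_top,
    ENNReal.toReal_ofReal (Real.rpow_nonneg
      (integral_nonneg fun a => Real.rpow_nonneg (norm_nonneg _) _) _),
    ENNReal.toReal_ofReal (Real.rpow_nonneg
      (integral_nonneg fun a => Real.rpow_nonneg (norm_nonneg _) _) _)]
  norm_num

theorem stmt5_aux_L1 {E : Type*} [NormedAddCommGroup E] [IsProbabilityMeasure μ]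
    {f : α → E} (hf : MemLp f 2 μ) :
    ∫ a, ‖f a‖ ∂μ ≤ (eLpNorm f 2 μ).toReal := by
  have hμ0 : μ ≠ 0 := by
    intro h
    have h1 := measure_univ (μ := μ)
    rw [h] at h1; simp at h1
  have hone : eLpNorm (fun _ : α => (1:ℝ)) 2 μ = 1 := by
    rw [eLpNorm_const _ two_ne_zero hμ0]
    simp
  have H := stmt5_aux_CS hf (memLp_const (μ := μ) (1:ℝ))
  simpa [hone] using H

end Aux

set_option maxHeartbeats 1000000 in
/-- Let `B` be a Hilbert space of vector fields on `ℝ²`,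
continuously embedded in `C¹` (realised through a linear map `ι` into vector
fields whose values and Lipschitz constants are controlled by `C_e ‖v‖_B`).
Then the momentum map `J : L²(S¹,ℝ²) × L²(S¹,ℝ²) → B*`, given by
`J(p,q)(v) = ⟨p, v∘q⟩_{L²} = ∫_{S¹} p(s)·v(q(s)) ds`, is well defined
(i.e. `J(p,q)` is a continuous linear functional on `B`) and is Lipschitz
continuous on bounded sets of `L² × L²` with respect to the dual norm on `B*`. -/
theorem stmt_5 (B : Type*) [NormedAddCommGroup B] [InnerProductSpace ℝ B] [CompleteSpace B]
    (ι : B →ₗ[ℝ] (EuclideanSpace ℝ (Fin 2) → EuclideanSpace ℝ (Fin 2)))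
    (Ce : ℝ) (hCe : 0 < Ce)
    (hbdd : ∀ (v : B) (x : EuclideanSpace ℝ (Fin 2)), ‖ι v x‖ ≤ Ce * ‖v‖)
    (hlip : ∀ (v : B) (x y : EuclideanSpace ℝ (Fin 2)),
      ‖ι v x - ι v y‖ ≤ Ce * ‖v‖ * ‖x - y‖) :
    ∃ J : (ℝ → EuclideanSpace ℝ (Fin 2)) → (ℝ → EuclideanSpace ℝ (Fin 2)) → (B →L[ℝ] ℝ),
      -- `J` is given by the claimed formula on `L²` pairs
      (∀ p q : ℝ → EuclideanSpace ℝ (Fin 2),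
        MemLp p 2 (volume.restrict (Set.Ioc (0:ℝ) 1)) →
        MemLp q 2 (volume.restrict (Set.Ioc (0:ℝ) 1)) →
        ∀ v : B, J p q v = ∫ s in Set.Ioc (0:ℝ) 1, ⟪p s, ι v (q s)⟫) ∧
      -- Lipschitz continuity on bounded sets of `L² × L²`
      (∀ r : ℝ, 0 < r → ∃ L : ℝ, 0 ≤ L ∧
        ∀ p₁ q₁ p₂ q₂ : ℝ → EuclideanSpace ℝ (Fin 2),
          MemLp p₁ 2 (volume.restrict (Set.Ioc (0:ℝ) 1)) →
          MemLp q₁ 2 (volume.restrict (Set.Ioc (0:ℝ) 1)) →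
          MemLp p₂ 2 (volume.restrict (Set.Ioc (0:ℝ) 1)) →
          MemLp q₂ 2 (volume.restrict (Set.Ioc (0:ℝ) 1)) →
          eLpNorm p₁ 2 (volume.restrict (Set.Ioc (0:ℝ) 1)) ≤ ENNReal.ofReal r →
          eLpNorm q₁ 2 (volume.restrict (Set.Ioc (0:ℝ) 1)) ≤ ENNReal.ofReal r →
          eLpNorm p₂ 2 (volume.restrict (Set.Ioc (0:ℝ) 1)) ≤ ENNReal.ofReal r →
          eLpNorm q₂ 2 (volume.restrict (Set.Ioc (0:ℝ) 1)) ≤ ENNReal.ofReal r →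
          ‖J p₁ q₁ - J p₂ q₂‖ ≤ L *
            ((eLpNorm (fun s => p₁ s - p₂ s) 2 (volume.restrict (Set.Ioc (0:ℝ) 1))).toReal +
             (eLpNorm (fun s => q₁ s - q₂ s) 2 (volume.restrict (Set.Ioc (0:ℝ) 1))).toReal)) := by
  classical
  set μ : Measure ℝ := volume.restrict (Set.Ioc (0:ℝ) 1) with hμdef
  haveI : IsProbabilityMeasure μ := ⟨by simp [hμdef, Real.volume_Ioc]⟩
  -- continuity of the vector fields
  have hcont : ∀ v : B, Continuous (ι v) := by
    intro v
    refine (LipschitzWith.of_dist_le_mul (K := Real.toNNReal (Ce * ‖v‖)) ?_).continuous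
    intro x y
    rw [dist_eq_norm, dist_eq_norm]
    exact (hlip v x y).trans
      (mul_le_mul_of_nonneg_right (Real.le_coe_toNNReal _) (norm_nonneg _))
  -- integrability of the integrand
  have key_int : ∀ (p q : ℝ → EuclideanSpace ℝ (Fin 2)),
      MemLp p 2 μ → MemLp q 2 μ → ∀ v : B,
      Integrable (fun s => ⟪p s, ι v (q s)⟫) μ := by
    intro p q hp hq v
    have hmeas : AEStronglyMeasurable (fun s => ι v (q s)) μ :=
      (hcont v).comp_aestronglyMeasurable hq.1
    refine Integrable.mono' (((hp.integrable one_le_two).norm).const_mul (Ce * ‖v‖))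
      (hp.1.inner hmeas) ?_
    filter_upwards with s
    calc ‖⟪p s, ι v (q s)⟫‖ ≤ ‖p s‖ * ‖ι v (q s)‖ := norm_inner_le_norm _ _
      _ ≤ ‖p s‖ * (Ce * ‖v‖) :=
        mul_le_mul_of_nonneg_left (hbdd v _) (norm_nonneg _)
      _ = Ce * ‖v‖ * ‖p s‖ := by ring
  -- the continuous linear functional, for admissible `p, q`
  have mk : ∀ (p q : ℝ → EuclideanSpace ℝ (Fin 2)),
      MemLp p 2 μ → MemLp q 2 μ →
      {T : B →L[ℝ] ℝ // ∀ v : B, T v = ∫ s, ⟪p s, ι v (q s)⟫ ∂μ} := by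
    intro p q hp hq
    refine ⟨LinearMap.mkContinuous
      { toFun := fun v => ∫ s, ⟪p s, ι v (q s)⟫ ∂μ
        map_add' := fun v w => by
          simp only [map_add, Pi.add_apply, inner_add_right]
          exact integral_add (key_int p q hp hq v) (key_int p q hp hq w)
        map_smul' := fun c v => by
          simp only [_root_.map_smul, Pi.smul_apply, real_inner_smul_right, RingHom.id_apply,
            smul_eq_mul]
          exact integral_const_mul c _ }
      (Ce * ∫ s, ‖p s‖ ∂μ) ?_, fun v => rfl⟩
    intro v
    have h1 : ‖∫ s, ⟪p s, ι v (q s)⟫ ∂μ‖ ≤ ∫ s, Ce * ‖v‖ * ‖p s‖ ∂μ := by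
      refine norm_integral_le_of_norm_le (((hp.integrable one_le_two).norm).const_mul _) ?_
      filter_upwards with s
      calc ‖⟪p s, ι v (q s)⟫‖ ≤ ‖p s‖ * ‖ι v (q s)‖ := norm_inner_le_norm _ _
        _ ≤ ‖p s‖ * (Ce * ‖v‖) :=
          mul_le_mul_of_nonneg_left (hbdd v _) (norm_nonneg _)
        _ = Ce * ‖v‖ * ‖p s‖ := by ring
    refine h1.trans (le_of_eq ?_)
    rw [integral_const_mul]
    ring
  refine ⟨fun p q => if h : MemLp p 2 μ ∧ MemLp q 2 μ then (mk p q h.1 h.2).1 else 0,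
    ?_, ?_⟩
  · intro p q hp hq v
    dsimp only
    rw [dif_pos ⟨hp, hq⟩]
    exact (mk p q hp hq).2 v
  · intro r hr
    refine ⟨Ce * (1 + r), by positivity, ?_⟩
    intro p₁ q₁ p₂ q₂ hp₁ hq₁ hp₂ hq₂ hb1 hb2 hb3 hb4
    dsimp only
    rw [dif_pos ⟨hp₁, hq₁⟩, dif_pos ⟨hp₂, hq₂⟩]
    have hΔp : MemLp (fun s => p₁ s - p₂ s) 2 μ := hp₁.sub hp₂
    have hΔq : MemLp (fun s => q₁ s - q₂ s) 2 μ := hq₁.sub hq₂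
    set A : ℝ := (eLpNorm (fun s => p₁ s - p₂ s) 2 μ).toReal with hA
    set Bn : ℝ := (eLpNorm (fun s => q₁ s - q₂ s) 2 μ).toReal with hB
    have hA0 : 0 ≤ A := ENNReal.toReal_nonneg
    have hB0 : 0 ≤ Bn := ENNReal.toReal_nonneg
    refine ContinuousLinearMap.opNorm_le_bound _ (by positivity) ?_
    intro v
    rw [ContinuousLinearMap.sub_apply, (mk p₁ q₁ hp₁ hq₁).2 v, (mk p₂ q₂ hp₂ hq₂).2 v]
    have hint1 : Integrable (fun s => Ce * ‖v‖ * ‖p₁ s - p₂ s‖) μ :=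
      ((hΔp.integrable one_le_two).norm).const_mul _
    have hint2 : Integrable (fun s => Ce * ‖v‖ * (‖p₂ s‖ * ‖q₁ s - q₂ s‖)) μ :=
      (stmt5_aux_mul hp₂ hΔq).const_mul _
    have step1 : ‖∫ s, ⟪p₁ s, ι v (q₁ s)⟫ ∂μ - ∫ s, ⟪p₂ s, ι v (q₂ s)⟫ ∂μ‖ ≤
        ∫ s, (Ce * ‖v‖ * ‖p₁ s - p₂ s‖ + Ce * ‖v‖ * (‖p₂ s‖ * ‖q₁ s - q₂ s‖)) ∂μ := by
      rw [← integral_sub (key_int p₁ q₁ hp₁ hq₁ v) (key_int p₂ q₂ hp₂ hq₂ v)]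
      refine norm_integral_le_of_norm_le (hint1.add hint2) ?_
      filter_upwards with s
      have hsplit : ⟪p₁ s, ι v (q₁ s)⟫ - ⟪p₂ s, ι v (q₂ s)⟫ =
          ⟪p₁ s - p₂ s, ι v (q₁ s)⟫ + ⟪p₂ s, ι v (q₁ s) - ι v (q₂ s)⟫ := by
        rw [inner_sub_left, inner_sub_right]; ring
      rw [hsplit]
      have h1 : ‖p₁ s - p₂ s‖ * ‖ι v (q₁ s)‖ ≤ Ce * ‖v‖ * ‖p₁ s - p₂ s‖ := by
        rw [mul_comm (Ce * ‖v‖)]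
        exact mul_le_mul_of_nonneg_left (hbdd v _) (norm_nonneg _)
      have h2 : ‖p₂ s‖ * ‖ι v (q₁ s) - ι v (q₂ s)‖ ≤
          Ce * ‖v‖ * (‖p₂ s‖ * ‖q₁ s - q₂ s‖) := by
        have := mul_le_mul_of_nonneg_left (hlip v (q₁ s) (q₂ s)) (norm_nonneg (p₂ s))
        exact this.trans (le_of_eq (by ring))
      calc ‖⟪p₁ s - p₂ s, ι v (q₁ s)⟫ + ⟪p₂ s, ι v (q₁ s) - ι v (q₂ s)⟫‖
          ≤ ‖⟪p₁ s - p₂ s, ι v (q₁ s)⟫‖ + ‖⟪p₂ s, ι v (q₁ s) - ι v (q₂ s)⟫‖ :=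
            norm_add_le _ _
        _ ≤ ‖p₁ s - p₂ s‖ * ‖ι v (q₁ s)‖ + ‖p₂ s‖ * ‖ι v (q₁ s) - ι v (q₂ s)‖ :=
            add_le_add (norm_inner_le_norm _ _) (norm_inner_le_norm _ _)
        _ ≤ Ce * ‖v‖ * ‖p₁ s - p₂ s‖ + Ce * ‖v‖ * (‖p₂ s‖ * ‖q₁ s - q₂ s‖) :=
            add_le_add h1 h2
    have step2 : ∫ s, (Ce * ‖v‖ * ‖p₁ s - p₂ s‖ + Ce * ‖v‖ * (‖p₂ s‖ * ‖q₁ s - q₂ s‖)) ∂μ =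
        Ce * ‖v‖ * (∫ s, ‖p₁ s - p₂ s‖ ∂μ) + Ce * ‖v‖ * (∫ s, ‖p₂ s‖ * ‖q₁ s - q₂ s‖ ∂μ) := by
      rw [integral_add hint1 hint2, integral_const_mul, integral_const_mul]
    have step3 : ∫ s, ‖p₁ s - p₂ s‖ ∂μ ≤ A := stmt5_aux_L1 hΔp
    have hp₂r : (eLpNorm p₂ 2 μ).toReal ≤ r := ENNReal.toReal_le_of_le_ofReal hr.le hb3
    have step4 : ∫ s, ‖p₂ s‖ * ‖q₁ s - q₂ s‖ ∂μ ≤ r * Bn := by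
      refine (stmt5_aux_CS hp₂ hΔq).trans ?_
      exact mul_le_mul_of_nonneg_right hp₂r hB0
    have hCv : (0:ℝ) ≤ Ce * ‖v‖ := by positivity
    calc ‖∫ s, ⟪p₁ s, ι v (q₁ s)⟫ ∂μ - ∫ s, ⟪p₂ s, ι v (q₂ s)⟫ ∂μ‖
        ≤ Ce * ‖v‖ * (∫ s, ‖p₁ s - p₂ s‖ ∂μ) + Ce * ‖v‖ * (∫ s, ‖p₂ s‖ * ‖q₁ s - q₂ s‖ ∂μ) :=
          step2 ▸ step1
      _ ≤ Ce * ‖v‖ * A + Ce * ‖v‖ * (r * Bn) :=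
          add_le_add (mul_le_mul_of_nonneg_left step3 hCv)
            (mul_le_mul_of_nonneg_left step4 hCv)
      _ ≤ Ce * (1 + r) * (A + Bn) * ‖v‖ := by
          nlinarith [norm_nonneg v, mul_nonneg (mul_nonneg hCe.le (norm_nonneg v)) hB0, mul_nonneg (mul_nonneg (mul_nonneg hCe.le hr.le) (norm_nonneg v)) hA0]
end

section
/- Detailed balance of the pCN Metropolis–Hastings algorithm: with target measure dμ/dμ₀(u) ∝ exp(−Φ(u)) for a measurable Φ bounded below on bounded sets, the Markov chain with proposal v = (1−β²)^{1/2}u + βw, w ∼ μ₀, and acceptance probability a(u,v) = min{1, exp(Φ(u) − Φ(v))} satisfies detailed balance with respect to μ, hence μ is an invariant measure of the chain. -/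
open MeasureTheory ProbabilityTheory
open scoped ENNReal

lemma map_swap_withDensity {α : Type*} [MeasurableSpace α] (ν : Measure (α × α))
    (g : α × α → ℝ≥0∞) (hg : Measurable g) :
    Measure.map Prod.swap (ν.withDensity g) =
      (Measure.map Prod.swap ν).withDensity (fun p => g p.swap) := by
  ext s hs
  rw [Measure.map_apply measurable_swap hs, withDensity_apply _ (measurable_swap hs),
    withDensity_apply _ hs,
    setLIntegral_map hs (show Measurable fun p : α × α => g p.swap from hg.comp measurable_swap)
      measurable_swap]
  simp

/-- Detailed balance of the pCN Metropolis–Hastings algorithm.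
With target `dμ/dμ₀(u) ∝ exp(−Φ(u))` for measurable `Φ` bounded below on
bounded sets, proposal kernel `Q` (the pCN proposal, assumed reversible with
respect to the Gaussian prior `μ₀`: `μ₀(du)Q(u,dv) = μ₀(dv)Q(v,du)`), and
acceptance probability `a(u,v) = min{1, exp(Φ(u) − Φ(v))}`, the chain
satisfies detailed balance with respect to `μ` (it suffices that
`exp(−Φ(u)) a(u,v) = exp(−Φ(v)) a(v,u)`), hence `μ` is invariant for the
Metropolis–Hastings kernel `K`. -/
theorem stmt_17 (H : Type*) [NormedAddCommGroup H] [InnerProductSpace ℝ H]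
    [CompleteSpace H] [TopologicalSpace.SeparableSpace H]
    [MeasurableSpace H] [BorelSpace H]
    (μ₀ : Measure H) [IsProbabilityMeasure μ₀]
    (Q : Kernel H H) [IsMarkovKernel Q]
    (hsym : Measure.map Prod.swap (μ₀.compProd Q) = μ₀.compProd Q)
    (Φ : H → ℝ) (hΦ : Measurable Φ)
    (hbdd : ∀ r : ℝ, ∃ c : ℝ, ∀ u : H, ‖u‖ ≤ r → c ≤ Φ u)
    (a : H → H → ℝ) (ha : ∀ u v, a u v = min 1 (Real.exp (Φ u - Φ v)))
    (μ : Measure H)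
    (hμ : μ = μ₀.withDensity (fun u => ENNReal.ofReal (Real.exp (-Φ u))))
    (K : H → Measure H)
    (hK : ∀ u, K u = (Q u).withDensity (fun v => ENNReal.ofReal (a u v)) +
      ((1 : ENNReal) - ∫⁻ v, ENNReal.ofReal (a u v) ∂(Q u)) • Measure.dirac u) :
    -- the pointwise detailed-balance identity
    (∀ u v, Real.exp (-Φ u) * a u v = Real.exp (-Φ v) * a v u) ∧
    -- detailed balance of the acceptance-weighted proposal with respect to μ
    Measure.map Prod.swap
        ((μ.compProd Q).withDensity (fun p => ENNReal.ofReal (a p.1 p.2))) =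
      (μ.compProd Q).withDensity (fun p => ENNReal.ofReal (a p.1 p.2)) ∧
    -- hence μ is invariant for the Metropolis–Hastings chain
    μ.bind K = μ := by
  subst hμ
  set f : H → ℝ≥0∞ := fun u => ENNReal.ofReal (Real.exp (-Φ u)) with hf_def
  set m : Measure H := μ₀.withDensity f with hm_def
  have hf : Measurable f := ENNReal.measurable_ofReal.comp (Real.measurable_exp.comp hΦ.neg)
  have ha_nonneg : ∀ u v, 0 ≤ a u v := fun u v => by
    rw [ha]; exact le_min zero_le_one (Real.exp_nonneg _)
  have ha_le1 : ∀ u v, a u v ≤ 1 := fun u v => by rw [ha]; exact min_le_left _ _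
  set aR : H × H → ℝ≥0∞ := fun p => ENNReal.ofReal (a p.1 p.2) with haR_def
  have haR : Measurable aR := by
    have : aR = fun p => ENNReal.ofReal (min 1 (Real.exp (Φ p.1 - Φ p.2))) := by
      funext p; simp [haR_def, ha]
    rw [this]
    exact ENNReal.measurable_ofReal.comp
      (measurable_const.min (Real.measurable_exp.comp
        ((hΦ.comp measurable_fst).sub (hΦ.comp measurable_snd))))
  -- Part 1: pointwise detailed balance
  have h1 : ∀ u v, Real.exp (-Φ u) * a u v = Real.exp (-Φ v) * a v u := by
    have key : ∀ x y : ℝ, Real.exp (-x) * min 1 (Real.exp (x - y))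
        = min (Real.exp (-x)) (Real.exp (-y)) := by
      intro x y
      rw [mul_min_of_nonneg _ _ (Real.exp_nonneg _), mul_one, ← Real.exp_add,
        show -x + (x - y) = -y from by ring]
    intro u v
    rw [ha, ha, key, key, min_comm]
  have hffst : Measurable fun p : H × H => f p.1 := hf.comp measurable_fst
  -- Step A: compProd of a withDensity measure
  have hA : m.compProd Q = (μ₀.compProd Q).withDensity (fun p => f p.1) := by
    ext s hs
    rw [Measure.compProd_apply hs, withDensity_apply _ hs,
      hm_def, lintegral_withDensity_eq_lintegral_mul μ₀ hf
        (Kernel.measurable_kernel_prodMk_left hs),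
      ← lintegral_indicator hs, Measure.lintegral_compProd
        (hffst.indicator hs)]
    refine lintegral_congr fun u => ?_
    calc (f * fun u => Q u (Prod.mk u ⁻¹' s)) u
        = f u * Q u (Prod.mk u ⁻¹' s) := rfl
      _ = ∫⁻ v, (Prod.mk u ⁻¹' s).indicator (fun _ => f u) v ∂Q u :=
          (lintegral_indicator_const (measurable_prodMk_left hs) _).symm
      _ = ∫⁻ v, s.indicator (fun p => f p.1) (u, v) ∂Q u := by
          refine lintegral_congr fun v => ?_
          by_cases hv : (u, v) ∈ s <;> simp [Set.indicator_apply, hv]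
  -- Part 2: detailed balance of the acceptance-weighted proposal
  set g : H × H → ℝ≥0∞ := fun p => f p.1 * aR p with hg_def
  have hg : Measurable g := hffst.mul haR
  have hgsym : (fun p : H × H => g p.swap) = g := by
    funext p
    have h := h1 p.2 p.1
    simp only [hg_def, haR_def, hf_def, Prod.fst_swap, Prod.snd_swap]
    rw [← ENNReal.ofReal_mul (Real.exp_nonneg _), ← ENNReal.ofReal_mul (Real.exp_nonneg _), h]
  have hwd : (m.compProd Q).withDensity aR = (μ₀.compProd Q).withDensity g := by
    rw [hA, ← withDensity_mul _ hffst haR]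
    rfl
  have h2 : Measure.map Prod.swap ((m.compProd Q).withDensity aR)
      = (m.compProd Q).withDensity aR := by
    rw [hwd, map_swap_withDensity _ g hg, hsym, hgsym]
  -- Part 3: invariance
  set α : H → ℝ≥0∞ := fun u => ∫⁻ v, ENNReal.ofReal (a u v) ∂Q u with hα_def
  have hαm : Measurable α := Measurable.lintegral_kernel_prod_right (κ := Q) haR
  have hα1 : ∀ u, α u ≤ 1 := by
    intro u
    calc α u ≤ ∫⁻ _, 1 ∂Q u := lintegral_mono fun v => ENNReal.ofReal_le_one.2 (ha_le1 u v)
      _ = 1 := by simp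
  refine ⟨h1, h2, ?_⟩
  ext s hs
  -- auxiliary: the function p ↦ aR p · 1_s(p.2)
  set Fs : H × H → ℝ≥0∞ := fun p => aR p * s.indicator 1 p.2 with hFs_def
  have hFs : Measurable Fs := haR.mul ((measurable_one.indicator hs).comp measurable_snd)
  have hKm : Measurable K := by
    refine Measure.measurable_of_measurable_coe K fun t ht => ?_
    simp only [hK, Measure.coe_add, Pi.add_apply, Measure.smul_apply, smul_eq_mul]
    have heq : ∀ u, (Q u).withDensity (fun v => ENNReal.ofReal (a u v)) t
        = ∫⁻ v, (fun p : H × H => aR p * t.indicator 1 p.2) (u, v) ∂Q u := by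
      intro u
      rw [withDensity_apply _ ht, ← lintegral_indicator ht]
      refine lintegral_congr fun v => ?_
      by_cases hv : v ∈ t <;> simp [Set.indicator_apply, hv, haR_def]
    simp_rw [heq]
    refine Measurable.add
      (Measurable.lintegral_kernel_prod_right (κ := Q)
        (haR.mul ((measurable_one.indicator ht).comp measurable_snd)))
      (((measurable_const.sub hαm).mul ?_))
    simp_rw [Measure.dirac_apply' _ ht]
    exact measurable_one.indicator ht
  rw [Measure.bind_apply hs hKm.aemeasurable]
  have key : ∀ u, K u s = (∫⁻ v, Fs (u, v) ∂Q u) + s.indicator (fun u => 1 - α u) u := by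
    intro u
    rw [hK]
    simp only [Measure.coe_add, Pi.add_apply, Measure.smul_apply, smul_eq_mul]
    congr 1
    · rw [withDensity_apply _ hs, ← lintegral_indicator hs]
      refine lintegral_congr fun v => ?_
      by_cases hv : v ∈ s <;> simp [hFs_def, Set.indicator_apply, hv, haR_def]
    · rw [Measure.dirac_apply' _ hs]
      by_cases hu : u ∈ s <;> simp [Set.indicator_apply, hu, hα_def]
  simp_rw [key]
  rw [lintegral_add_left (Measurable.lintegral_kernel_prod_right (f := fun u v => Fs (u, v)) (κ := Q) hFs)]
  have hν1 : ((m.compProd Q).withDensity aR) (Set.univ ×ˢ s)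
      = ∫⁻ u, ∫⁻ v, Fs (u, v) ∂Q u ∂m := by
    rw [withDensity_apply _ (MeasurableSet.univ.prod hs),
      ← lintegral_indicator (MeasurableSet.univ.prod hs),
      Measure.lintegral_compProd (haR.indicator (MeasurableSet.univ.prod hs))]
    refine lintegral_congr fun u => lintegral_congr fun v => ?_
    by_cases hv : v ∈ s <;> simp [hFs_def, Set.indicator_apply, hv]
  have hν2 : ((m.compProd Q).withDensity aR) (s ×ˢ Set.univ) = ∫⁻ u in s, α u ∂m := by
    rw [withDensity_apply _ (hs.prod MeasurableSet.univ),
      ← lintegral_indicator (hs.prod MeasurableSet.univ),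
      Measure.lintegral_compProd (haR.indicator (hs.prod MeasurableSet.univ)),
      ← lintegral_indicator hs]
    refine lintegral_congr fun u => ?_
    by_cases hu : u ∈ s
    · rw [Set.indicator_of_mem hu]
      simp only [hα_def]
      refine lintegral_congr fun v => ?_
      rw [Set.indicator_of_mem (Set.mk_mem_prod hu (Set.mem_univ v))]
    · simp [Set.indicator_apply, hu]
  have hswap : ((m.compProd Q).withDensity aR) (Set.univ ×ˢ s)
      = ((m.compProd Q).withDensity aR) (s ×ˢ Set.univ) := by
    conv_lhs => rw [← h2]
    rw [Measure.map_apply measurable_swap (MeasurableSet.univ.prod hs),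
      Set.preimage_swap_prod]
  rw [← hν1, hswap, hν2, lintegral_indicator hs,
    ← lintegral_add_left hαm]
  have hone : (fun u => α u + (1 - α u)) = fun _ => (1 : ℝ≥0∞) := by
    funext u
    exact add_tsub_cancel_of_le (hα1 u)
  calc ∫⁻ u in s, (α u + (1 - α u)) ∂m = ∫⁻ _ in s, (1 : ℝ≥0∞) ∂m := by rw [hone]
    _ = m s := setLIntegral_one s
end
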